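/- Let a ∈ (0,1], σ ≥ 0, L ≥ 0 and m > 0 be real numbers, and let (e_k)_{k≥0} and (d_k)_{k≥0} be sequences of nonnegative reals such that e_0 ≤ σ²/m and, for every k ≥ 1, e_k ≤ (1−a)²·e_{k−1} + 2a²σ² + 2L²(1−a)²·d_{k−1}. Then for every natural number K, Σ_{k=0}^{K} e_k ≤ σ²/(a m) + 2aσ²K + (2L²/a)·Σ_{k=0}^{K−1} d_k. -/

import Mathlib

theorem stmt_9 (a σ L m : ℝ) (ha : a ∈ Set.Ioc (0 : ℝ) 1) (hσ : 0 ≤ σ) (hL : 0 ≤ L)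
    (hm : 0 < m) (e d : ℕ → ℝ) (he : ∀ k, 0 ≤ e k) (hd : ∀ k, 0 ≤ d k)
    (he0 : e 0 ≤ σ ^ 2 / m)
    (hrec : ∀ k : ℕ, 1 ≤ k →
      e k ≤ (1 - a) ^ 2 * e (k - 1) + 2 * a ^ 2 * σ ^ 2 + 2 * L ^ 2 * (1 - a) ^ 2 * d (k - 1))
    (K : ℕ) :
    ∑ k ∈ Finset.range (K + 1), e k ≤
      σ ^ 2 / (a * m) + 2 * a * σ ^ 2 * K + (2 * L ^ 2 / a) * ∑ k ∈ Finset.range K, d k := by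
  obtain ⟨ha0, ha1⟩ := ha
  set S := ∑ k ∈ Finset.range (K + 1), e k with hS
  set D := ∑ k ∈ Finset.range K, d k with hD
  have hSnn : 0 ≤ S := Finset.sum_nonneg fun i _ => he i
  have hDnn : 0 ≤ D := Finset.sum_nonneg fun i _ => hd i
  have hstep : ∑ k ∈ Finset.range K, e (k + 1) ≤
      (1 - a) ^ 2 * (∑ k ∈ Finset.range K, e k) + 2 * a ^ 2 * σ ^ 2 * K
        + 2 * L ^ 2 * (1 - a) ^ 2 * D := by
    calc ∑ k ∈ Finset.range K, e (k + 1)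
        ≤ ∑ k ∈ Finset.range K,
            ((1 - a) ^ 2 * e k + 2 * a ^ 2 * σ ^ 2 + 2 * L ^ 2 * (1 - a) ^ 2 * d k) := by
          apply Finset.sum_le_sum
          intro k _
          have := hrec (k + 1) (Nat.le_add_left 1 k)
          simpa using this
      _ = _ := by
          rw [Finset.sum_add_distrib, Finset.sum_add_distrib, ← Finset.mul_sum, ← Finset.mul_sum,
            ← Finset.mul_sum, Finset.sum_const, Finset.card_range, hD]
          push_cast
          ring
  have hsub : ∑ k ∈ Finset.range K, e k ≤ S := by
    rw [hS, Finset.sum_range_succ]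
    linarith [he K]
  have hSle : S ≤ e 0 + (1 - a) ^ 2 * S + 2 * a ^ 2 * σ ^ 2 * K
      + 2 * L ^ 2 * (1 - a) ^ 2 * D := by
    have h1 : S = ∑ k ∈ Finset.range K, e (k + 1) + e 0 := Finset.sum_range_succ' e K
    have hmul : (1 - a) ^ 2 * (∑ k ∈ Finset.range K, e k) ≤ (1 - a) ^ 2 * S :=
      mul_le_mul_of_nonneg_left hsub (sq_nonneg _)
    linarith
  have hsq : (1 - a) ^ 2 ≤ 1 - a := by nlinarith
  have hsq1 : (1 - a) ^ 2 ≤ 1 := by nlinarith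
  have h2 : (1 - a) ^ 2 * S ≤ S - a * S := by nlinarith [mul_le_mul_of_nonneg_right hsq hSnn]
  have h3 : 2 * L ^ 2 * (1 - a) ^ 2 * D ≤ 2 * L ^ 2 * D := by
    nlinarith [mul_le_mul_of_nonneg_right hsq1 hDnn, sq_nonneg L]
  have haS : a * S ≤ σ ^ 2 / m + 2 * a ^ 2 * σ ^ 2 * K + 2 * L ^ 2 * D := by linarith
  have key : (σ ^ 2 / m + 2 * a ^ 2 * σ ^ 2 * K + 2 * L ^ 2 * D) / a
      = σ ^ 2 / (a * m) + 2 * a * σ ^ 2 * K + (2 * L ^ 2 / a) * D := by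
    field_simp
  have hfin : S ≤ (σ ^ 2 / m + 2 * a ^ 2 * σ ^ 2 * K + 2 * L ^ 2 * D) / a := by
    rw [le_div_iff₀ ha0, mul_comm]
    exact haS
  rw [key] at hfin
  exact hfin
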